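/- Let e be a squarefree positive integer and t an integer whose residue class modulo e has multiplicative order d in (ℤ/eℤ)ˣ, and for each positive integer s set α_s = gcd(e, t^s − 1). Then for every positive integer k, α_k = α_{gcd(k,d)}. -/

import Mathlib

/-- **The `α`-sequence only depends on indices mod `d`.**
Let `e` be a squarefree positive integer and `t` an integer whose residue class mod `e`
has multiplicative order `d` in `(ℤ/eℤ)ˣ`; for positive `s` set `α s = gcd (e, t^s - 1)`.
Then `α k = α (gcd (k, d))` for every positive integer `k`. -/
theorem alpha_eq_alpha_gcd_with_d (e d : ℕ) (he : 0 < e) (hsq : Squarefree e) (t : ℤ)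
    (u : (ZMod e)ˣ) (hu : (u : ZMod e) = (t : ZMod e)) (hord : orderOf u = d)
    (k : ℕ) (hk : 0 < k) :
    Int.gcd (e : ℤ) (t ^ k - 1) = Int.gcd (e : ℤ) (t ^ (Nat.gcd k d) - 1) := by
  set g := Nat.gcd k d with hg
  -- `e ∣ t^d - 1`
  have hud : (u : ZMod e) ^ d = 1 := by
    rw [← Units.val_pow_eq_pow_val, ← hord, pow_orderOf_eq_one, Units.val_one]
  have htd : ((t : ZMod e)) ^ d = 1 := by rw [← hu]; exact hud
  have hd : (e : ℤ) ∣ t ^ d - 1 := by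
    rw [← ZMod.intCast_zmod_eq_zero_iff_dvd]
    push_cast
    rw [htd, sub_self]
  -- `t^g - 1 ∣ t^k - 1`
  have hgk : t ^ g - 1 ∣ t ^ k - 1 := by
    obtain ⟨c, hc⟩ := Nat.gcd_dvd_left k d
    have := sub_dvd_pow_sub_pow (t ^ g) 1 c
    rw [one_pow, ← pow_mul, ← hc] at this
    exact this
  apply Nat.dvd_antisymm
  · -- hard direction via order of t in ZMod a
    set a := Int.gcd (e : ℤ) (t ^ k - 1) with ha
    have hae : (a : ℤ) ∣ (e : ℤ) := Int.gcd_dvd_left _ _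
    have hak : (a : ℤ) ∣ t ^ k - 1 := Int.gcd_dvd_right _ _
    have had : (a : ℤ) ∣ t ^ d - 1 := hae.trans hd
    have hk1 : ((t : ZMod a)) ^ k = 1 := by
      have : ((t ^ k - 1 : ℤ) : ZMod a) = 0 :=
        (ZMod.intCast_zmod_eq_zero_iff_dvd _ _).mpr hak
      push_cast at this
      linear_combination this
    have hd1 : ((t : ZMod a)) ^ d = 1 := by
      have : ((t ^ d - 1 : ℤ) : ZMod a) = 0 :=
        (ZMod.intCast_zmod_eq_zero_iff_dvd _ _).mpr had
      push_cast at this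
      linear_combination this
    have hog : orderOf ((t : ZMod a)) ∣ g :=
      Nat.dvd_gcd (orderOf_dvd_of_pow_eq_one hk1) (orderOf_dvd_of_pow_eq_one hd1)
    have hg1 : ((t : ZMod a)) ^ g = 1 := orderOf_dvd_iff_pow_eq_one.mp hog
    have hag : (a : ℤ) ∣ t ^ g - 1 := by
      rw [← ZMod.intCast_zmod_eq_zero_iff_dvd]
      push_cast
      rw [hg1, sub_self]
    exact_mod_cast Int.dvd_coe_gcd hae hag
  · exact_mod_cast Int.dvd_coe_gcd (Int.gcd_dvd_left _ _)
      ((Int.gcd_dvd_right _ _).trans hgk)
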